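/- arXiv:1907.13553 — 2 statements merged into one kernel-verified Lean document; each statement's English description precedes it below -/
import Mathlib

section
/- Let R : U^{n'} → U^{n'} be the operator that samples n' points uniformly with replacement from its input dataset, and let A be (ε̂, δ̂)-differentially private. Fix a bound r₀. Then for neighboring inputs S₁'', S₂'' differing at index j, conditioned on the event that index j is sampled at most r₀ times by R, the composition A∘R satisfies: for every measurable O, Pr[A(R(S₁'')) ∈ O | r ≤ r₀] ≤ e^{r₀ ε̂}·Pr[A(R(S₂'')) ∈ O | r ≤ r₀] + r₀ e^{r₀ ε̂} δ̂, where r is the number of times index j is sampled (the sampling event is identical in distribution for both inputs). -/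
open MeasureTheory
open scoped Classical

lemma group_privacy {U Ω : Type*} [MeasurableSpace Ω] (n' : ℕ)
    (A : (Fin n' → U) → Measure Ω) (εh δh : ℝ) (hε : 0 ≤ εh) (hδ : 0 ≤ δh)
    (hDP : ∀ S S' : Fin n' → U, (∃ i, ∀ j ≠ i, S j = S' j) →
      ∀ O : Set Ω, MeasurableSet O →
        A S O ≤ ENNReal.ofReal (Real.exp εh) * A S' O + ENNReal.ofReal δh)
    (O : Set Ω) (hO : MeasurableSet O) :
    ∀ k : ℕ, ∀ S S' : Fin n' → U,
      (Finset.univ.filter fun i => S i ≠ S' i).card ≤ k →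
      A S O ≤ ENNReal.ofReal (Real.exp (k * εh)) * A S' O
        + ENNReal.ofReal (k * Real.exp (k * εh) * δh) := by
  intro k
  induction k with
  | zero =>
    intro S S' hcard
    have h0 : (Finset.univ.filter fun i => S i ≠ S' i) = ∅ :=
      Finset.card_eq_zero.mp (Nat.le_zero.mp hcard)
    have hSS : S = S' := by
      funext i
      by_contra h
      have : i ∈ (Finset.univ.filter fun i => S i ≠ S' i) := by
        simp [h]
      simp [h0] at this
    simp [hSS]
  | succ k ih =>
    intro S S' hcard
    by_cases hne : (Finset.univ.filter fun i => S i ≠ S' i) = ∅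
    · have hSS : S = S' := by
        funext i
        by_contra h
        have : i ∈ (Finset.univ.filter fun i => S i ≠ S' i) := by simp [h]
        simp [hne] at this
      subst hSS
      refine le_trans ?_ (le_add_of_nonneg_right zero_le)
      nth_rewrite 1 [← one_mul (A S O)]
      gcongr
      rw [show (1 : ENNReal) = ENNReal.ofReal 1 by simp]
      exact ENNReal.ofReal_le_ofReal (Real.one_le_exp (by positivity))
    · obtain ⟨i, hi⟩ := Finset.nonempty_iff_ne_empty.mpr hne
      have hi' : S i ≠ S' i := (Finset.mem_filter.mp hi).2
      set S'' : Fin n' → U := Function.update S i (S' i) with hS''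
      have hstep : A S O ≤ ENNReal.ofReal (Real.exp εh) * A S'' O + ENNReal.ofReal δh := by
        apply hDP S S'' ⟨i, ?_⟩ O hO
        intro j hj
        simp [hS'', Function.update_of_ne hj]
      have hsub : (Finset.univ.filter fun l => S'' l ≠ S' l)
          ⊆ (Finset.univ.filter fun l => S l ≠ S' l).erase i := by
        intro l hl
        rcases Finset.mem_filter.mp hl with ⟨_, hl2⟩
        rcases eq_or_ne l i with rfl | hli
        · simp [hS''] at hl2
        · rw [Finset.mem_erase]
          refine ⟨hli, Finset.mem_filter.mpr ⟨Finset.mem_univ _, ?_⟩⟩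
          rwa [hS'', Function.update_of_ne hli] at hl2
      have hcard' : (Finset.univ.filter fun l => S'' l ≠ S' l).card ≤ k := by
        calc _ ≤ ((Finset.univ.filter fun l => S l ≠ S' l).erase i).card :=
              Finset.card_le_card hsub
          _ = (Finset.univ.filter fun l => S l ≠ S' l).card - 1 :=
              Finset.card_erase_of_mem hi
          _ ≤ k := by omega
      have hih := ih S'' S' hcard'
      calc A S O ≤ ENNReal.ofReal (Real.exp εh) * A S'' O + ENNReal.ofReal δh := hstep
        _ ≤ ENNReal.ofReal (Real.exp εh) *
              (ENNReal.ofReal (Real.exp (k * εh)) * A S' O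
                + ENNReal.ofReal (k * Real.exp (k * εh) * δh)) + ENNReal.ofReal δh := by
            gcongr
        _ ≤ _ := by
            rw [mul_add, ← mul_assoc, ← ENNReal.ofReal_mul (Real.exp_nonneg _),
              ← Real.exp_add, ← ENNReal.ofReal_mul (Real.exp_nonneg _),
              add_assoc, ← ENNReal.ofReal_add (by positivity) hδ]
            apply add_le_add
            · have he : εh + (k:ℝ) * εh = (((k+1 : ℕ)):ℝ) * εh := by push_cast; ring
              rw [he]
            · apply ENNReal.ofReal_le_ofReal
              have hexp : Real.exp εh * Real.exp ((k:ℝ) * εh)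
                  = Real.exp (((k:ℝ)+1) * εh) := by
                rw [← Real.exp_add]; ring_nf
              have hE : (1:ℝ) ≤ Real.exp (((k:ℝ)+1) * εh) :=
                Real.one_le_exp (by positivity)
              have h1 : Real.exp εh * ((k:ℝ) * Real.exp ((k:ℝ) * εh) * δh)
                  = (k:ℝ) * Real.exp (((k:ℝ)+1) * εh) * δh := by
                rw [← hexp]; ring
              push_cast
              rw [h1]
              have := mul_le_mul_of_nonneg_right hE hδ
              nlinarith [this]

/-- conditional group privacy for the composition `A ∘ R`, where `R`
samples `n'` points uniformly with replacement (modeled as a uniformly random index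
map `σ : Fin n' → Fin n'`) and `A` is `(εh, δh)`-DP. For neighboring inputs differing
at index `j`, conditioned on the event `E = {σ : index j is sampled at most r₀ times}`
(an event identical in distribution for both inputs), the conditional output
probabilities satisfy the `(r₀ εh, r₀ e^{r₀ εh} δh)`-DP inequality. The conditional
probabilities `Pr[· | E]` are written with both sides multiplied by `μ E`. -/
theorem stmt_6 {U Ω : Type*} [MeasurableSpace Ω] (n' : ℕ) [NeZero n']
    (A : (Fin n' → U) → Measure Ω) (εh δh : ℝ) (hε : 0 ≤ εh) (hδ : 0 ≤ δh)
    (hDP : ∀ S S' : Fin n' → U, (∃ i, ∀ j ≠ i, S j = S' j) →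
      ∀ O : Set Ω, MeasurableSet O →
        A S O ≤ ENNReal.ofReal (Real.exp εh) * A S' O + ENNReal.ofReal δh)
    (j : Fin n') (S₁ S₂ : Fin n' → U) (hneighbor : ∀ j' ≠ j, S₁ j' = S₂ j')
    (r₀ : ℕ) (O : Set Ω) (hO : MeasurableSet O) :
    (∫⁻ σ in {σ : Fin n' → Fin n' | (Finset.univ.filter fun i => σ i = j).card ≤ r₀},
        A (S₁ ∘ σ) O ∂(PMF.uniformOfFintype (Fin n' → Fin n')).toMeasure)
      ≤ ENNReal.ofReal (Real.exp (r₀ * εh)) *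
          (∫⁻ σ in {σ : Fin n' → Fin n' |
              (Finset.univ.filter fun i => σ i = j).card ≤ r₀},
            A (S₂ ∘ σ) O ∂(PMF.uniformOfFintype (Fin n' → Fin n')).toMeasure)
        + ENNReal.ofReal (r₀ * Real.exp (r₀ * εh) * δh) *
            (PMF.uniformOfFintype (Fin n' → Fin n')).toMeasure
              {σ : Fin n' → Fin n' | (Finset.univ.filter fun i => σ i = j).card ≤ r₀} := by
  set μ := (PMF.uniformOfFintype (Fin n' → Fin n')).toMeasure with hμ
  set E := {σ : Fin n' → Fin n' | (Finset.univ.filter fun i => σ i = j).card ≤ r₀} with hE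
  have hmeas : Measurable fun σ : Fin n' → Fin n' => A (S₂ ∘ σ) O :=
    measurable_of_finite _
  have hpt : ∀ σ ∈ E, A (S₁ ∘ σ) O
      ≤ ENNReal.ofReal (Real.exp (r₀ * εh)) * A (S₂ ∘ σ) O
        + ENNReal.ofReal (r₀ * Real.exp (r₀ * εh) * δh) := by
    intro σ hσ
    apply group_privacy n' A εh δh hε hδ hDP O hO r₀
    refine le_trans (Finset.card_le_card ?_) hσ
    intro i hi
    rw [Finset.mem_filter] at hi ⊢
    refine ⟨Finset.mem_univ _, ?_⟩
    by_contra h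
    exact hi.2 (hneighbor (σ i) h)
  calc (∫⁻ σ in E, A (S₁ ∘ σ) O ∂μ)
      ≤ ∫⁻ σ in E, (ENNReal.ofReal (Real.exp (r₀ * εh)) * A (S₂ ∘ σ) O
          + ENNReal.ofReal (r₀ * Real.exp (r₀ * εh) * δh)) ∂μ :=
        setLIntegral_mono (measurable_of_finite _) hpt
    _ = ENNReal.ofReal (Real.exp (r₀ * εh)) * (∫⁻ σ in E, A (S₂ ∘ σ) O ∂μ)
          + ENNReal.ofReal (r₀ * Real.exp (r₀ * εh) * δh) * μ E := by
        rw [lintegral_add_right _ measurable_const, lintegral_const_mul _ hmeas,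
          setLIntegral_const]
end

section
/- Sauer's lemma: if H ⊆ {0,1}^X has VC dimension at most d, then for every finite V ⊆ X with |V| = t ≥ d ≥ 1, the number of dichotomies |Π_H(V)| ≤ Σ_{i=0}^{d} C(t,i) ≤ (et/d)^d. -/
/-- The set of dichotomies realized by a class on a finite set. -/
def dichotomies {X : Type*} (F : Set (X → Bool)) (V : Finset X) : Set (V → Bool) :=
  (fun (f : X → Bool) (x : V) => f (x : X)) '' F

/-- `F` shatters the finite set `V`. -/
def Shatters {X : Type*} (F : Set (X → Bool)) (V : Finset X) : Prop :=
  ∀ g : X → Bool, ∃ f ∈ F, ∀ x ∈ V, f x = g x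

open Finset in
lemma stmt_18_real_bound (d t : ℕ) (hd : 1 ≤ d) (ht : d ≤ t) :
    ((∑ i ∈ Finset.range (d + 1), Nat.choose t i : ℕ) : ℝ)
        ≤ (Real.exp 1 * t / d) ^ d := by
  have ht0 : 0 < t := lt_of_lt_of_le hd ht
  have htR : (0:ℝ) < t := by exact_mod_cast ht0
  have hdR : (0:ℝ) < d := by exact_mod_cast hd
  set x : ℝ := (d : ℝ) / t with hx
  have hx0 : 0 < x := div_pos hdR htR
  have hx1 : x ≤ 1 := by
    rw [hx, div_le_one htR]; exact_mod_cast ht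
  have key : ((∑ i ∈ range (d + 1), Nat.choose t i : ℕ) : ℝ) * x ^ d
      ≤ Real.exp d := by
    push_cast
    rw [Finset.sum_mul]
    calc ∑ i ∈ range (d + 1), (Nat.choose t i : ℝ) * x ^ d
        ≤ ∑ i ∈ range (d + 1), (Nat.choose t i : ℝ) * x ^ i := by
          apply Finset.sum_le_sum
          intro i hi
          exact mul_le_mul_of_nonneg_left
            (pow_le_pow_of_le_one hx0.le hx1 (Nat.lt_succ_iff.1 (Finset.mem_range.1 hi)))
            (by positivity)
      _ ≤ ∑ i ∈ range (t + 1), (Nat.choose t i : ℝ) * x ^ i := by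
          apply Finset.sum_le_sum_of_subset_of_nonneg
          · exact Finset.range_subset_range.2 (by omega)
          · intro i _ _; positivity
      _ = (x + 1) ^ t := by
          rw [add_pow]
          apply Finset.sum_congr rfl
          intro i _; ring
      _ ≤ Real.exp x ^ t := by
          apply pow_le_pow_left₀ (by positivity)
          linarith [Real.add_one_le_exp x]
      _ = Real.exp (x * t) := by
          rw [mul_comm, Real.exp_nat_mul]
      _ = Real.exp d := by
          congr 1
          rw [hx, div_mul_cancel₀ _ htR.ne']
  have hxd : 0 < x ^ d := pow_pos hx0 d
  rw [← le_div_iff₀ hxd] at key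
  calc ((∑ i ∈ range (d + 1), Nat.choose t i : ℕ) : ℝ)
      ≤ Real.exp d / x ^ d := key
    _ = (Real.exp 1 * t / d) ^ d := by
        rw [← Real.exp_one_pow, ← div_pow]
        congr 1
        rw [hx, div_div_eq_mul_div]

/-- Sauer's lemma: if `VC(H) ≤ d` then for every finite `V` with
`|V| = t ≥ d ≥ 1`, the number of dichotomies of `H` on `V` is at most
`Σ_{i=0}^d C(t,i)`, which is at most `(e t / d)^d`. -/
theorem stmt_18 {X : Type*} (H : Set (X → Bool)) (d : ℕ) (hd : 1 ≤ d)
    (hVC : ∀ V : Finset X, Shatters H V → V.card ≤ d)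
    (t : ℕ) (ht : d ≤ t) (V : Finset X) (hV : V.card = t) :
    (dichotomies H V).ncard ≤ ∑ i ∈ Finset.range (d + 1), Nat.choose t i
      ∧ ((∑ i ∈ Finset.range (d + 1), Nat.choose t i : ℕ) : ℝ)
          ≤ (Real.exp 1 * t / d) ^ d := by
  classical
  refine ⟨?_, stmt_18_real_bound d t hd ht⟩
  have hfin : (dichotomies H V).Finite := Set.toFinite _
  set D : Finset (↥V → Bool) := hfin.toFinset with hD
  set S : (↥V → Bool) → Finset ↥V := fun g => Finset.univ.filter (fun x => g x = true)
    with hS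
  have hSinj : Function.Injective S := by
    intro g₁ g₂ h
    funext x
    have := Finset.ext_iff.1 h x
    simp only [hS, Finset.mem_filter, Finset.mem_univ, true_and] at this
    cases hg : g₁ x <;> cases hg' : g₂ x <;> simp_all
  set 𝒜 : Finset (Finset ↥V) := D.image S with hA
  have hcard : (dichotomies H V).ncard = 𝒜.card := by
    rw [Set.ncard_eq_toFinset_card _ hfin, hA, Finset.card_image_of_injective _ hSinj]
  -- VC dimension bound
  have hvc : 𝒜.vcDim ≤ d := by
    apply Finset.sup_le
    intro s hs
    have hshat : 𝒜.Shatters s := Finset.mem_shatterer.1 hs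
    set W : Finset X := s.image ((↑) : ↥V → X) with hW
    have hsW : s.card = W.card :=
      (Finset.card_image_of_injective _ Subtype.val_injective).symm
    rw [hsW]
    apply hVC
    intro g
    obtain ⟨A, hAmem, hsA⟩ := hshat (Finset.filter_subset (fun (x : ↥V) => g (x : X) = true) s)
    obtain ⟨g', hg'D, rfl⟩ := Finset.mem_image.1 hAmem
    have hg'd : g' ∈ dichotomies H V := by rwa [hD, Set.Finite.mem_toFinset] at hg'D
    obtain ⟨f, hfH, rfl⟩ := hg'd
    refine ⟨f, hfH, ?_⟩
    intro x hx
    obtain ⟨y, hy, rfl⟩ := Finset.mem_image.1 hx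
    have hiff := Finset.ext_iff.1 hsA y
    simp only [Finset.mem_inter, Finset.mem_filter, Finset.mem_univ, true_and, hS] at hiff
    cases hgy : g ((y : ↥V) : X) <;> cases hfy : f ((y : ↥V) : X) <;> simp_all
  -- Sauer-Shelah via mathlib
  have h1 : 𝒜.card ≤ 𝒜.shatterer.card := Finset.card_le_card_shatterer 𝒜
  have h2 : 𝒜.shatterer.card ≤ ∑ k ∈ Finset.Iic 𝒜.vcDim, (Fintype.card ↥V).choose k :=
    Finset.card_shatterer_le_sum_vcDim
  have h3 : ∑ k ∈ Finset.Iic 𝒜.vcDim, (Fintype.card ↥V).choose k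
      ≤ ∑ k ∈ Finset.Iic d, (Fintype.card ↥V).choose k :=
    Finset.sum_le_sum_of_subset (Finset.Iic_subset_Iic.2 hvc)
  have hcardV : Fintype.card ↥V = t := by rw [Fintype.card_coe, hV]
  have hIic : Finset.Iic d = Finset.range (d + 1) := by
    ext i; simp [Nat.lt_succ_iff]
  rw [hcard]
  calc 𝒜.card ≤ ∑ k ∈ Finset.Iic d, (Fintype.card ↥V).choose k :=
        h1.trans (h2.trans h3)
    _ = ∑ i ∈ Finset.range (d + 1), Nat.choose t i := by rw [hcardV, hIic]
end
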